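/- Let d ≥ 1, let x, y ∈ ℝ^d, and let k : ℝ × ℝ → ℝ be a measurable kernel with K(x,y) = ∫_{S^{d-1}} k(⟨ξ,x⟩, ⟨ξ,y⟩) dU(ξ), where U is the uniform probability measure on the unit sphere S^{d-1}. Assume there exists c > 0 such that |k(z₁, z₂)| ≤ c for all z₁, z₂ ∈ ℝ with |z₁|, |z₂| ≤ max(‖x‖, ‖y‖). Let ξ₁, …, ξ_P be independent random variables on a probability space (Ω, 𝒫), each distributed according to U. Then the expected absolute error satisfies 𝔼[ |(1/P) ∑_{p=1}^P k(⟨ξ_p, x⟩, ⟨ξ_p, y⟩) - K(x,y)| ] ≤ √(2π) c / √P. -/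

import Mathlib

open MeasureTheory Metric
open scoped RealInnerProductSpace

/-- The uniform (normalized rotation-invariant) probability measure on the unit sphere
`S^{d-1} ⊆ ℝ^d`, obtained by normalizing the surface measure. -/
noncomputable def uniformSphere (d : ℕ) :
    Measure (sphere (0 : EuclideanSpace ℝ (Fin d)) 1) :=
  ((volume : Measure (EuclideanSpace ℝ (Fin d))).toSphere Set.univ)⁻¹ •
    (volume : Measure (EuclideanSpace ℝ (Fin d))).toSphere

open MeasureTheory Metric

lemma mc_abs_integral_le_sqrt {Ω : Type*} [MeasurableSpace Ω] (Pr : Measure Ω)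
    [IsProbabilityMeasure Pr] (Z : Ω → ℝ) (hZ : MemLp Z 2 Pr) :
    ∫ ω, |Z ω| ∂Pr ≤ Real.sqrt (∫ ω, (Z ω) ^ 2 ∂Pr) := by
  have h22 : Real.HolderConjugate 2 2 := Real.HolderConjugate.two_two
  have habs : MemLp (fun ω => |Z ω|) (ENNReal.ofReal 2) Pr := by
    rw [show ENNReal.ofReal 2 = 2 by norm_num]
    exact hZ.abs
  have hone : MemLp (fun _ : Ω => (1 : ℝ)) (ENNReal.ofReal 2) Pr := by
    rw [show ENNReal.ofReal 2 = 2 by norm_num]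
    exact memLp_const 1
  have h := integral_mul_le_Lp_mul_Lq_of_nonneg h22
    (ae_of_all _ fun ω => abs_nonneg (Z ω)) (ae_of_all _ fun _ => zero_le_one)
    habs hone
  simp only [mul_one] at h
  have h1 : ∫ ω, |Z ω| ^ (2 : ℝ) ∂Pr = ∫ ω, (Z ω) ^ 2 ∂Pr := by
    refine integral_congr_ae (ae_of_all _ fun ω => ?_)
    simp only [Real.rpow_two, sq_abs]
  have h2 : ∫ _ : Ω, (1:ℝ) ^ (2:ℝ) ∂Pr = 1 := by simp
  rw [h1, h2, Real.one_rpow, mul_one] at h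
  rw [Real.sqrt_eq_rpow]
  exact h

lemma mc_error_bound {Ω : Type*} [MeasurableSpace Ω] (Pr : Measure Ω)
    [IsProbabilityMeasure Pr] (P : ℕ) (hP : 1 ≤ P) (X : Fin P → Ω → ℝ) (c K : ℝ)
    (hc : 0 ≤ c) (hmeas : ∀ p, Measurable (X p)) (hbdd : ∀ p ω, |X p ω| ≤ c)
    (hmean : ∀ p, ∫ ω, X p ω ∂Pr = K)
    (hindep : Set.Pairwise (↑(Finset.univ : Finset (Fin P)))
      fun i j => ProbabilityTheory.IndepFun (X i) (X j) Pr) :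
    ∫ ω, |(1 / (P : ℝ)) * ∑ p : Fin P, X p ω - K| ∂Pr ≤ c / Real.sqrt P := by
  have hPpos : (0:ℝ) < P := by exact_mod_cast hP
  have hP0 : (P:ℝ) ≠ 0 := ne_of_gt hPpos
  have hmem : ∀ p, MemLp (X p) 2 Pr := fun p =>
    MemLp.of_bound (hmeas p).aestronglyMeasurable c
      (ae_of_all _ fun ω => by rw [Real.norm_eq_abs]; exact hbdd p ω)
  have hint : ∀ p, Integrable (X p) Pr := fun p => (hmem p).integrable one_le_two
  set A : Ω → ℝ := fun ω => (1 / (P:ℝ)) * ∑ p : Fin P, X p ω with hA_def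
  have hA_meas : Measurable A :=
    (Finset.measurable_sum Finset.univ fun p _ => hmeas p).const_mul _
  have hA_bdd : ∀ ω, |A ω| ≤ c := by
    intro ω
    have hsum : |∑ p : Fin P, X p ω| ≤ (P:ℝ) * c := by
      calc |∑ p : Fin P, X p ω| ≤ ∑ p : Fin P, |X p ω| := Finset.abs_sum_le_sum_abs _ _
        _ ≤ ∑ _p : Fin P, c := Finset.sum_le_sum fun p _ => hbdd p ω
        _ = (P:ℝ) * c := by simp [mul_comm]
    calc |A ω| = (1/(P:ℝ)) * |∑ p : Fin P, X p ω| := by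
          rw [hA_def, abs_mul, abs_of_nonneg (by positivity : (0:ℝ) ≤ 1/(P:ℝ))]
      _ ≤ (1/(P:ℝ)) * ((P:ℝ) * c) := by gcongr
      _ = c := by field_simp
  have hA_mem : MemLp A 2 Pr :=
    MemLp.of_bound hA_meas.aestronglyMeasurable c
      (ae_of_all _ fun ω => by rw [Real.norm_eq_abs]; exact hA_bdd ω)
  have hEA : ∫ ω, A ω ∂Pr = K := by
    rw [hA_def]
    rw [integral_const_mul, integral_finset_sum Finset.univ fun p _ => hint p]
    simp only [hmean, Finset.sum_const, Finset.card_univ, Fintype.card_fin, nsmul_eq_mul]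
    field_simp
  have h3 : ∀ p, ProbabilityTheory.variance (X p) Pr ≤ c^2 := by
    intro p
    refine (ProbabilityTheory.variance_le_expectation_sq (hmeas p).aestronglyMeasurable).trans ?_
    have h4 : ∫ ω, (X p ^ 2 : Ω → ℝ) ω ∂Pr ≤ ∫ _ : Ω, c^2 ∂Pr := by
      refine integral_mono (hmem p).integrable_sq (integrable_const _) fun ω => ?_
      simp only [Pi.pow_apply]
      rw [← sq_abs]
      exact pow_le_pow_left₀ (abs_nonneg _) (hbdd p ω) 2
    simpa using h4
  have hvarA : ProbabilityTheory.variance A Pr ≤ c^2 / P := by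
    have h1 : ProbabilityTheory.variance A Pr
        = (1/(P:ℝ))^2 * ProbabilityTheory.variance (∑ p : Fin P, X p) Pr := by
      have hAe : A = fun ω => (1/(P:ℝ)) * (∑ p : Fin P, X p) ω := by
        funext ω; rw [hA_def]; simp [Finset.sum_apply]
      rw [hAe, ProbabilityTheory.variance_const_mul]
    have h2 := ProbabilityTheory.IndepFun.variance_sum (fun p _ => hmem p) hindep
    calc ProbabilityTheory.variance A Pr
        = (1/(P:ℝ))^2 * ∑ p, ProbabilityTheory.variance (X p) Pr := by rw [h1, h2]
      _ ≤ (1/(P:ℝ))^2 * ∑ _p : Fin P, c^2 :=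
          mul_le_mul_of_nonneg_left (Finset.sum_le_sum fun p _ => h3 p) (by positivity)
      _ = c^2 / P := by
          simp only [Finset.sum_const, Finset.card_univ, Fintype.card_fin, nsmul_eq_mul]
          field_simp
  have hsq : ∫ ω, (A ω - K)^2 ∂Pr = ProbabilityTheory.variance A Pr := by
    rw [ProbabilityTheory.variance_eq_integral hA_meas.aemeasurable, hEA]
  have hZ_mem : MemLp (fun ω => A ω - K) 2 Pr := hA_mem.sub (memLp_const K)
  have hCS := mc_abs_integral_le_sqrt Pr (fun ω => A ω - K) hZ_mem
  calc ∫ ω, |(1/(P:ℝ)) * ∑ p : Fin P, X p ω - K| ∂Pr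
      = ∫ ω, |A ω - K| ∂Pr := by simp only [hA_def]
    _ ≤ Real.sqrt (∫ ω, (A ω - K)^2 ∂Pr) := hCS
    _ = Real.sqrt (ProbabilityTheory.variance A Pr) := by rw [hsq]
    _ ≤ Real.sqrt (c^2 / P) := Real.sqrt_le_sqrt hvarA
    _ = c / Real.sqrt P := by
        rw [Real.sqrt_div (sq_nonneg c), Real.sqrt_sq hc]

/-- Expected absolute error bound `√(2π) c / √P` for the Monte Carlo approximation of a
sliced kernel `K(x,y) = ∫_{S^{d-1}} k(⟨ξ,x⟩,⟨ξ,y⟩) dU(ξ)` by `P` i.i.d. uniform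
directions, when `k` is bounded by `c` on the relevant range. -/
theorem sliced_kernel_expected_error_bound (d : ℕ) (hd : 1 ≤ d)
    (x y : EuclideanSpace ℝ (Fin d)) (k : ℝ × ℝ → ℝ) (hk_meas : Measurable k)
    (K : ℝ)
    (hK : K = ∫ ξ : sphere (0 : EuclideanSpace ℝ (Fin d)) 1,
      k (⟪(ξ : EuclideanSpace ℝ (Fin d)), x⟫, ⟪(ξ : EuclideanSpace ℝ (Fin d)), y⟫)
      ∂(uniformSphere d))
    (c : ℝ) (hc : 0 < c)
    (hbdd : ∀ z₁ z₂ : ℝ, |z₁| ≤ max ‖x‖ ‖y‖ → |z₂| ≤ max ‖x‖ ‖y‖ → |k (z₁, z₂)| ≤ c)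
    {Ω : Type*} [MeasurableSpace Ω] (Pr : Measure Ω) [IsProbabilityMeasure Pr]
    (P : ℕ) (hP : 1 ≤ P)
    (ξ : Fin P → Ω → sphere (0 : EuclideanSpace ℝ (Fin d)) 1)
    (hξ_meas : ∀ p, Measurable (ξ p))
    (hξ_indep : ProbabilityTheory.iIndepFun ξ Pr)
    (hξ_dist : ∀ p, Measure.map (ξ p) Pr = uniformSphere d) :
    (∫ ω, |(1 / (P : ℝ)) * ∑ p : Fin P,
        k (⟪((ξ p ω : sphere (0 : EuclideanSpace ℝ (Fin d)) 1) : EuclideanSpace ℝ (Fin d)), x⟫,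
           ⟪((ξ p ω : sphere (0 : EuclideanSpace ℝ (Fin d)) 1) : EuclideanSpace ℝ (Fin d)), y⟫)
        - K| ∂Pr)
      ≤ Real.sqrt (2 * Real.pi) * c / Real.sqrt P := by
  set f : sphere (0 : EuclideanSpace ℝ (Fin d)) 1 → ℝ := fun s =>
    k (⟪(s : EuclideanSpace ℝ (Fin d)), x⟫, ⟪(s : EuclideanSpace ℝ (Fin d)), y⟫) with hf_def
  have hf_meas : Measurable f := by
    apply hk_meas.comp
    exact ((continuous_subtype_val.inner continuous_const).prodMk
      (continuous_subtype_val.inner continuous_const)).measurable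
  have hf_bdd : ∀ s, |f s| ≤ c := by
    intro s
    have hnorm : ‖(s : EuclideanSpace ℝ (Fin d))‖ = 1 := mem_sphere_zero_iff_norm.mp s.2
    refine hbdd _ _ ?_ ?_
    · calc |⟪(s : EuclideanSpace ℝ (Fin d)), x⟫| ≤ ‖(s : EuclideanSpace ℝ (Fin d))‖ * ‖x‖ :=
            abs_real_inner_le_norm _ _
        _ = ‖x‖ := by rw [hnorm, one_mul]
        _ ≤ max ‖x‖ ‖y‖ := le_max_left _ _
    · calc |⟪(s : EuclideanSpace ℝ (Fin d)), y⟫| ≤ ‖(s : EuclideanSpace ℝ (Fin d))‖ * ‖y‖ :=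
            abs_real_inner_le_norm _ _
        _ = ‖y‖ := by rw [hnorm, one_mul]
        _ ≤ max ‖x‖ ‖y‖ := le_max_right _ _
  have hmean : ∀ p, ∫ ω, f (ξ p ω) ∂Pr = K := by
    intro p
    rw [hK]
    rw [← hξ_dist p, integral_map (hξ_meas p).aemeasurable hf_meas.aestronglyMeasurable]
  have hindep : Set.Pairwise (↑(Finset.univ : Finset (Fin P)))
      fun i j => ProbabilityTheory.IndepFun (fun ω => f (ξ i ω)) (fun ω => f (ξ j ω)) Pr := by
    intro i _ j _ hij
    exact (hξ_indep.indepFun hij).comp hf_meas hf_meas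
  have key := mc_error_bound Pr P hP (fun p ω => f (ξ p ω)) c K hc.le
    (fun p => hf_meas.comp (hξ_meas p)) (fun p ω => hf_bdd (ξ p ω)) hmean hindep
  refine le_trans key ?_
  gcongr
  nlinarith [Real.one_le_sqrt.mpr (by nlinarith [Real.pi_gt_three] : (1:ℝ) ≤ 2 * Real.pi),
    Real.sqrt_nonneg (2 * Real.pi)]
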